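/- arXiv:1605.02728 — 2 statements merged into one kernel-verified Lean document; each statement's English description precedes it below -/
import Mathlib

section
/- For 0 < q < 1 and nonnegative integer n, the Stieltjes–Wigert polynomials satisfy S_{2n+1}(q^{-2n-1}; q) = 0 and S_{2n}(q^{-2n}; q) = (-1)^n q^{-n²}/(q²;q²)_n, where S_n(x;q) = ∑_{k=0}^n q^{k²}(-x)^k/((q;q)_k (q;q)_{n-k}). -/
noncomputable def qp (q a : ℝ) (n : ℕ) : ℝ := ∏ k ∈ Finset.range n, (1 - a * q ^ k)

noncomputable def SW (q x : ℝ) (n : ℕ) : ℝ :=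
  ∑ k ∈ Finset.range (n + 1), q ^ (k ^ 2) * (-x) ^ k / (qp q q k * qp q q (n - k))

noncomputable def tT (q : ℝ) (n k : ℕ) : ℝ :=
  (-1) ^ k * q ^ ((k : ℤ) * ((k : ℤ) - (n : ℤ))) / (qp q q k * qp q q (n - k))

noncomputable def tH (q : ℝ) (n k : ℕ) : ℝ :=
  (-1) ^ k * q ^ ((k : ℤ) * ((k : ℤ) - (n : ℤ)) - (k : ℤ)) / (qp q q k * qp q q (n - k))

noncomputable def Tq (q : ℝ) (n : ℕ) : ℝ := ∑ k ∈ Finset.range (n + 1), tT q n k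

noncomputable def Hq (q : ℝ) (n : ℕ) : ℝ := ∑ k ∈ Finset.range (n + 1), tH q n k

lemma qp_pos (q : ℝ) (hq0 : 0 < q) (hq1 : q < 1) (n : ℕ) : 0 < qp q q n := by
  unfold qp
  apply Finset.prod_pos
  intro k _
  have h1 : q * q ^ k ≤ q := mul_le_of_le_one_right hq0.le (pow_le_one₀ hq0.le hq1.le)
  linarith

lemma qp_ne (q : ℝ) (hq0 : 0 < q) (hq1 : q < 1) (n : ℕ) : qp q q n ≠ 0 :=
  (qp_pos q hq0 hq1 n).ne'

lemma qp_zero (q : ℝ) : qp q q 0 = 1 := by simp [qp]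

lemma qp_succ (q : ℝ) (n : ℕ) : qp q q (n + 1) = qp q q n * (1 - q ^ (n + 1)) := by
  unfold qp
  rw [Finset.prod_range_succ, pow_succ']

lemma osp (q : ℝ) (hq0 : 0 < q) (hq1 : q < 1) (n : ℕ) : 0 < 1 - q ^ (n + 1) := by
  have := pow_lt_one₀ hq0.le hq1 (n : ℕ).succ_ne_zero
  simp only [Nat.succ_eq_add_one] at this
  linarith

lemma Tq_odd (q : ℝ) (hq0 : 0 < q) (hq1 : q < 1) (n : ℕ) : Tq q (2 * n + 1) = 0 := by
  unfold Tq
  have h2 := Finset.sum_range_reflect (tT q (2 * n + 1)) (2 * n + 1 + 1)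
  have h : ∀ j ∈ Finset.range (2 * n + 1 + 1),
      tT q (2 * n + 1) (2 * n + 1 + 1 - 1 - j) = -(tT q (2 * n + 1) j) := by
    intro j hj
    simp only [Finset.mem_range] at hj
    unfold tT
    rw [show 2 * n + 1 + 1 - 1 - j = 2 * n + 1 - j from by omega,
        show 2 * n + 1 - (2 * n + 1 - j) = j from by omega]
    have hexp : ((2 * n + 1 - j : ℕ) : ℤ) * (((2 * n + 1 - j : ℕ) : ℤ) - ((2 * n + 1 : ℕ) : ℤ))
        = (j : ℤ) * ((j : ℤ) - ((2 * n + 1 : ℕ) : ℤ)) := by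
      have hc : ((2 * n + 1 - j : ℕ) : ℤ) = 2 * (n : ℤ) + 1 - (j : ℤ) := by omega
      have hc2 : ((2 * n + 1 : ℕ) : ℤ) = 2 * (n : ℤ) + 1 := by omega
      rw [hc, hc2]; ring
    have hj2 : ((-1 : ℝ) ^ j) * ((-1 : ℝ) ^ j) = 1 := by
      rw [← pow_add]; exact Even.neg_one_pow ⟨j, rfl⟩
    have hodd : ((-1 : ℝ) ^ (2 * n + 1 - j)) * ((-1 : ℝ) ^ j) = -1 := by
      rw [← pow_add, show 2 * n + 1 - j + j = 2 * n + 1 from by omega]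
      exact Odd.neg_one_pow ⟨n, by omega⟩
    have hsign : (-1 : ℝ) ^ (2 * n + 1 - j) = -(-1 : ℝ) ^ j := by
      linear_combination ((-1 : ℝ) ^ j) * hodd - ((-1 : ℝ) ^ (2 * n + 1 - j)) * hj2
    rw [hexp, hsign]
    ring
  rw [Finset.sum_congr rfl h] at h2
  rw [Finset.sum_neg_distrib] at h2
  linarith

lemma step1 (q : ℝ) (hq0 : 0 < q) (hq1 : q < 1) (n : ℕ) :
    (1 - q ^ (n + 1)) * Tq q (n + 1) = -Tq q n + Hq q n := by
  have hq : q ≠ 0 := hq0.ne'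
  have key : ∀ k ∈ Finset.range n,
      (1 - q ^ (n + 1)) * tT q (n + 1) (k + 1) = -tT q n k + tH q n (k + 1) := by
    intro k hk
    simp only [Finset.mem_range] at hk
    obtain ⟨m, rfl⟩ : ∃ m, n = k + m + 1 := ⟨n - k - 1, by omega⟩
    unfold tT tH
    rw [show k + m + 1 + 1 - (k + 1) = m + 1 from by omega,
        show k + m + 1 - k = m + 1 from by omega,
        show k + m + 1 - (k + 1) = m from by omega]
    rw [show ((k + 1 : ℕ) : ℤ) * (((k + 1 : ℕ) : ℤ) - ((k + m + 1 + 1 : ℕ) : ℤ))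
          = -((((k + 1) * (m + 1) : ℕ)) : ℤ) from by push_cast; ring]
    rw [show ((k : ℕ) : ℤ) * (((k : ℕ) : ℤ) - ((k + m + 1 : ℕ) : ℤ))
          = -((((k + 1) * (m + 1) : ℕ)) : ℤ) + ((m + 1 : ℕ) : ℤ) from by push_cast; ring]
    rw [show ((k + 1 : ℕ) : ℤ) * (((k + 1 : ℕ) : ℤ) - ((k + m + 1 : ℕ) : ℤ)) - ((k + 1 : ℕ) : ℤ)
          = -((((k + 1) * (m + 1) : ℕ)) : ℤ) from by push_cast; ring]
    rw [zpow_add₀ hq]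
    simp only [zpow_neg, zpow_natCast]
    rw [qp_succ q k, qp_succ q m]
    have h1 : q ^ ((k + 1) * (m + 1)) ≠ 0 := pow_ne_zero _ hq
    have h2 := qp_ne q hq0 hq1 k
    have h3 := qp_ne q hq0 hq1 m
    have h4 := (osp q hq0 hq1 k).ne'
    have h5 := (osp q hq0 hq1 m).ne'
    field_simp
    ring
  have e5 : (1 - q ^ (n + 1)) * tT q (n + 1) 0 = tH q n 0 := by
    unfold tT tH
    simp only [Nat.sub_zero, Nat.cast_zero, zero_mul, zero_sub, zpow_zero, pow_zero, sub_zero,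
      neg_zero]
    rw [qp_succ, qp_zero]
    have h2 := qp_ne q hq0 hq1 n
    have h4 := (osp q hq0 hq1 n).ne'
    field_simp
  have e6 : (1 - q ^ (n + 1)) * tT q (n + 1) (n + 1) = -tT q n n := by
    unfold tT
    rw [Nat.sub_self, Nat.sub_self]
    rw [show ((n + 1 : ℕ) : ℤ) * (((n + 1 : ℕ) : ℤ) - ((n + 1 : ℕ) : ℤ)) = 0 from by ring,
        show ((n : ℕ) : ℤ) * (((n : ℕ) : ℤ) - ((n : ℕ) : ℤ)) = 0 from by ring]
    rw [zpow_zero, qp_succ, qp_zero]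
    have h2 := qp_ne q hq0 hq1 n
    have h4 := (osp q hq0 hq1 n).ne'
    field_simp
    rw [pow_succ]
    ring
  have h1 : Tq q (n + 1) = (∑ k ∈ Finset.range n, tT q (n + 1) (k + 1))
      + tT q (n + 1) (n + 1) + tT q (n + 1) 0 := by
    unfold Tq
    rw [Finset.sum_range_succ', Finset.sum_range_succ]
  have h2 : Tq q n = (∑ k ∈ Finset.range n, tT q n k) + tT q n n := by
    unfold Tq
    rw [Finset.sum_range_succ]
  have h3 : Hq q n = (∑ k ∈ Finset.range n, tH q n (k + 1)) + tH q n 0 := by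
    unfold Hq
    rw [Finset.sum_range_succ']
  have h4 : (1 - q ^ (n + 1)) * (∑ k ∈ Finset.range n, tT q (n + 1) (k + 1))
      = -(∑ k ∈ Finset.range n, tT q n k) + ∑ k ∈ Finset.range n, tH q n (k + 1) := by
    rw [Finset.mul_sum, Finset.sum_congr rfl key, Finset.sum_add_distrib,
      Finset.sum_neg_distrib]
  linear_combination (1 - q ^ (n + 1)) * h1 + h4 + e5 + e6 + h2 - h3

lemma step2 (q : ℝ) (hq0 : 0 < q) (hq1 : q < 1) (n : ℕ) :
    (1 - q ^ (n + 1)) * Hq q (n + 1) = Hq q n - q ^ (-(n : ℤ) - 1) * Tq q n := by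
  have hq : q ≠ 0 := hq0.ne'
  have key : ∀ k ∈ Finset.range n,
      (1 - q ^ (n + 1)) * tH q (n + 1) (k + 1)
        = tH q n (k + 1) - q ^ (-(n : ℤ) - 1) * tT q n k := by
    intro k hk
    simp only [Finset.mem_range] at hk
    obtain ⟨m, rfl⟩ : ∃ m, n = k + m + 1 := ⟨n - k - 1, by omega⟩
    unfold tT tH
    rw [show k + m + 1 + 1 - (k + 1) = m + 1 from by omega,
        show k + m + 1 - k = m + 1 from by omega,
        show k + m + 1 - (k + 1) = m from by omega]
    rw [show ((k + 1 : ℕ) : ℤ) * (((k + 1 : ℕ) : ℤ) - ((k + m + 1 + 1 : ℕ) : ℤ)) - ((k + 1 : ℕ) : ℤ)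
          = -((((k + 1) * (m + 2) : ℕ)) : ℤ) from by push_cast; ring]
    rw [show ((k + 1 : ℕ) : ℤ) * (((k + 1 : ℕ) : ℤ) - ((k + m + 1 : ℕ) : ℤ)) - ((k + 1 : ℕ) : ℤ)
          = -((((k + 1) * (m + 2) : ℕ)) : ℤ) + ((k + 1 : ℕ) : ℤ) from by push_cast; ring]
    rw [show (-(((k + m + 1 : ℕ)) : ℤ) - 1)
          = -((((k + 1) * (m + 2) : ℕ)) : ℤ) + (((k * (m + 1) : ℕ)) : ℤ) from by push_cast; ring]
    rw [show ((k : ℕ) : ℤ) * (((k : ℕ) : ℤ) - ((k + m + 1 : ℕ) : ℤ))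
          = -(((k * (m + 1) : ℕ)) : ℤ) from by push_cast; ring]
    rw [zpow_add₀ hq, zpow_add₀ hq]
    simp only [zpow_neg, zpow_natCast]
    rw [qp_succ q k, qp_succ q m]
    have h1 : q ^ ((k + 1) * (m + 2)) ≠ 0 := pow_ne_zero _ hq
    have h1' : q ^ (k * (m + 1)) ≠ 0 := pow_ne_zero _ hq
    have h2 := qp_ne q hq0 hq1 k
    have h3 := qp_ne q hq0 hq1 m
    have h4 := (osp q hq0 hq1 k).ne'
    have h5 := (osp q hq0 hq1 m).ne'
    field_simp
    ring
  have e5 : (1 - q ^ (n + 1)) * tH q (n + 1) 0 = tH q n 0 := by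
    unfold tH
    simp only [Nat.sub_zero, Nat.cast_zero, zero_mul, zero_sub, zpow_zero, pow_zero, sub_zero,
      neg_zero]
    rw [qp_succ, qp_zero]
    have h2 := qp_ne q hq0 hq1 n
    have h4 := (osp q hq0 hq1 n).ne'
    field_simp
  have e6 : (1 - q ^ (n + 1)) * tH q (n + 1) (n + 1)
      = -(q ^ (-(n : ℤ) - 1) * tT q n n) := by
    unfold tT tH
    rw [Nat.sub_self, Nat.sub_self]
    rw [show ((n + 1 : ℕ) : ℤ) * (((n + 1 : ℕ) : ℤ) - ((n + 1 : ℕ) : ℤ)) - ((n + 1 : ℕ) : ℤ)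
          = -(n : ℤ) - 1 from by push_cast; ring,
        show ((n : ℕ) : ℤ) * (((n : ℕ) : ℤ) - ((n : ℕ) : ℤ)) = 0 from by ring]
    rw [zpow_zero, qp_succ, qp_zero]
    have h2 := qp_ne q hq0 hq1 n
    have h4 := (osp q hq0 hq1 n).ne'
    have h5 : q ^ (-(n : ℤ) - 1) ≠ 0 := zpow_ne_zero _ hq
    field_simp
    rw [pow_succ]
    ring
  have h1 : Hq q (n + 1) = (∑ k ∈ Finset.range n, tH q (n + 1) (k + 1))
      + tH q (n + 1) (n + 1) + tH q (n + 1) 0 := by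
    unfold Hq
    rw [Finset.sum_range_succ', Finset.sum_range_succ]
  have h2 : Tq q n = (∑ k ∈ Finset.range n, tT q n k) + tT q n n := by
    unfold Tq
    rw [Finset.sum_range_succ]
  have h3 : Hq q n = (∑ k ∈ Finset.range n, tH q n (k + 1)) + tH q n 0 := by
    unfold Hq
    rw [Finset.sum_range_succ']
  have h4 : (1 - q ^ (n + 1)) * (∑ k ∈ Finset.range n, tH q (n + 1) (k + 1))
      = (∑ k ∈ Finset.range n, tH q n (k + 1))
        - q ^ (-(n : ℤ) - 1) * ∑ k ∈ Finset.range n, tT q n k := by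
    rw [Finset.mul_sum, Finset.sum_congr rfl key, Finset.sum_sub_distrib, Finset.mul_sum]
  linear_combination (1 - q ^ (n + 1)) * h1 + h4 + e5 + e6 - h3 + q ^ (-(n : ℤ) - 1) * h2

lemma Tq_even (q : ℝ) (hq0 : 0 < q) (hq1 : q < 1) (n : ℕ) :
    Tq q (2 * n) = (-1) ^ n * q ^ (-((n : ℤ) ^ 2)) / qp (q ^ 2) (q ^ 2) n := by
  induction n with
  | zero => simp [Tq, tT, qp]
  | succ n ih =>
    have hq : q ≠ 0 := hq0.ne'
    have ho := Tq_odd q hq0 hq1 n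
    have o1 := step1 q hq0 hq1 (2 * n)
    have o2 := step2 q hq0 hq1 (2 * n)
    have o3 := step1 q hq0 hq1 (2 * n + 1)
    have hH : Hq q (2 * n) = Tq q (2 * n) := by
      rw [ho, mul_zero] at o1
      linarith
    have hQa : q ^ (-((2 * n : ℕ) : ℤ) - 1) * q ^ (2 * n + 1) = 1 := by
      rw [← zpow_natCast q (2 * n + 1), ← zpow_add₀ hq,
        show -((2 * n : ℕ) : ℤ) - 1 + ((2 * n + 1 : ℕ) : ℤ) = 0 from by push_cast; ring,
        zpow_zero]
    have hane : (1 - q ^ (2 * n + 1)) ≠ 0 := by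
      have := osp q hq0 hq1 (2 * n)
      linarith
    have step : (1 - q ^ (2 * n + 1)) * ((1 - q ^ (2 * n + 1 + 1)) * Tq q (2 * n + 1 + 1))
        = (1 - q ^ (2 * n + 1)) * (-(q ^ (-((2 * n : ℕ) : ℤ) - 1) * Tq q (2 * n))) := by
      linear_combination (1 - q ^ (2 * n + 1)) * o3 + o2 + hH - Tq q (2 * n) * hQa
        - (1 - q ^ (2 * n + 1)) * ho
    have hTT := mul_left_cancel₀ hane step
    have hbne : (1 - q ^ (2 * n + 1 + 1)) ≠ 0 := (osp q hq0 hq1 (2 * n + 1)).ne'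
    have hD := qp_ne (q ^ 2) (by positivity) (by nlinarith) n
    have hqp2 : qp (q ^ 2) (q ^ 2) (n + 1)
        = qp (q ^ 2) (q ^ 2) n * (1 - q ^ (2 * n + 1 + 1)) := by
      unfold qp
      rw [Finset.prod_range_succ]
      congr 2
      rw [← pow_mul, ← pow_add]
      congr 1
      ring
    have hsplit : q ^ (-(((n + 1 : ℕ)) : ℤ) ^ 2)
        = q ^ (-((n : ℕ) : ℤ) ^ 2) * q ^ (-((2 * n : ℕ) : ℤ) - 1) := by
      rw [← zpow_add₀ hq]
      congr 1
      push_cast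
      ring
    have ihm : Tq q (2 * n) * qp (q ^ 2) (q ^ 2) n = (-1) ^ n * q ^ (-((n : ℕ) : ℤ) ^ 2) :=
      (eq_div_iff hD).mp ih
    rw [show 2 * (n + 1) = 2 * n + 1 + 1 from by ring, hqp2, hsplit,
      eq_div_iff (mul_ne_zero hD hbne)]
    linear_combination qp (q ^ 2) (q ^ 2) n * hTT - q ^ (-((2 * n : ℕ) : ℤ) - 1) * ihm

lemma SW_eq_Tq (q : ℝ) (hq0 : 0 < q) (n : ℕ) : SW q (q ^ (-(n : ℤ))) n = Tq q n := by
  have hq : q ≠ 0 := hq0.ne'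
  unfold SW Tq tT
  refine Finset.sum_congr rfl fun k hk => ?_
  congr 1
  rw [neg_pow, ← zpow_natCast (q ^ (-(n:ℤ))) k, ← zpow_mul, ← zpow_natCast q (k^2),
    show (k:ℤ) * ((k:ℤ) - (n:ℤ)) = ((k^2 : ℕ) : ℤ) + (-(n:ℤ) * (k:ℕ)) from by push_cast; ring,
    zpow_add₀ hq]
  ring

theorem SW_special_values (q : ℝ) (hq0 : 0 < q) (hq1 : q < 1) (n : ℕ) :
    SW q (q ^ (-(2 * (n : ℤ) + 1))) (2 * n + 1) = 0 ∧
    SW q (q ^ (-(2 * (n : ℤ)))) (2 * n) = (-1) ^ n * (q ^ (n ^ 2))⁻¹ / qp (q ^ 2) (q ^ 2) n := by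
  constructor
  · have h := SW_eq_Tq q hq0 (2 * n + 1)
    have hc : ((2 * n + 1 : ℕ) : ℤ) = 2 * (n : ℤ) + 1 := by push_cast; ring
    rw [hc] at h
    rw [h, Tq_odd q hq0 hq1]
  · have h := SW_eq_Tq q hq0 (2 * n)
    have hc : ((2 * n : ℕ) : ℤ) = 2 * (n : ℤ) := by push_cast; ring
    rw [hc] at h
    rw [h, Tq_even q hq0 hq1]
    congr 1
    rw [← zpow_natCast q (n ^ 2), ← zpow_neg]
    congr 1
end

section
/- For 0 < q < 1 and every nonnegative integer n, S_n(-q^{-n+1/2}; q) = q^{-(n²-n)/4}/(q^{1/2};q^{1/2})_n and S_n(-q^{-n-1/2}; q) = q^{-(n²+n)/4}/(q^{1/2};q^{1/2})_n, where S_n(x;q) = ∑_{k=0}^n q^{k²}(-x)^k/((q;q)_k (q;q)_{n-k}). -/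
namespace SWaux

lemma qp_zero (q a : ℝ) : qp q a 0 = 1 := by simp [qp]

lemma qp_succ (q a : ℝ) (n : ℕ) : qp q a (n + 1) = qp q a n * (1 - a * q ^ n) :=
  Finset.prod_range_succ _ _

lemma qp_pos {q : ℝ} (h0 : 0 < q) (h1 : q < 1) (n : ℕ) : 0 < qp q q n := by
  refine Finset.prod_pos fun k _ => ?_
  have hk : q ^ k ≤ 1 := pow_le_one₀ h0.le h1.le
  nlinarith

lemma qp_neg_pos {p : ℝ} (h0 : 0 < p) (n : ℕ) : 0 < qp p (-p) n := by
  refine Finset.prod_pos fun k _ => ?_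
  have : 0 < p ^ k := pow_pos h0 k
  nlinarith

noncomputable def Bq (q : ℝ) : ℕ → ℕ → ℝ
  | _, 0 => 1
  | 0, _ + 1 => 0
  | n + 1, k + 1 => Bq q n (k + 1) + q ^ (n - k) * Bq q n k

lemma Bq_zero (q : ℝ) (n : ℕ) : Bq q n 0 = 1 := by cases n <;> rfl

lemma Bq_of_lt (q : ℝ) : ∀ {n k : ℕ}, n < k → Bq q n k = 0 := by
  intro n
  induction n with
  | zero =>
    intro k hk
    match k, hk with
    | k + 1, _ => rfl
  | succ n ih =>
    intro k hk
    match k, hk with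
    | k + 1, hk =>
      have h1 : n < k + 1 := by omega
      have h2 : n < k := by omega
      simp [Bq, ih h1, ih h2]

lemma Bq_mul (q : ℝ) : ∀ n k : ℕ, k ≤ n →
    Bq q n k * (qp q q k * qp q q (n - k)) = qp q q n := by
  intro n
  induction n with
  | zero =>
    intro k hk
    interval_cases k
    simp [Bq_zero, qp_zero]
  | succ n ih =>
    intro k hk
    match k with
    | 0 => simp [Bq_zero, qp_zero]
    | j + 1 =>
      rcases eq_or_lt_of_le hk with he | hlt
      · have hj : j = n := by omega
        subst hj
        have hz := Bq_of_lt q (show j < j + 1 by omega)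
        have h0 := ih j le_rfl
        show (Bq q j (j + 1) + q ^ (j - j) * Bq q j j) *
            (qp q q (j + 1) * qp q q (j + 1 - (j + 1))) = qp q q (j + 1)
        rw [hz, Nat.sub_self, Nat.sub_self, pow_zero, qp_zero, qp_succ]
        rw [Nat.sub_self, qp_zero] at h0
        linear_combination (1 - q * q ^ j) * h0
      · have hjn : j + 1 ≤ n := by omega
        have ih1 := ih (j + 1) hjn
        have ih2 := ih j (by omega)
        have hd1 : n - j = (n - (j + 1)) + 1 := by omega
        have hd2 : n + 1 - (j + 1) = (n - (j + 1)) + 1 := by omega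
        have hq1 : q ^ (n - j) = q ^ (n - (j + 1)) * q := by
          rw [hd1, pow_succ]
        have hq2 : q ^ n = q ^ j * q ^ (n - (j + 1)) * q := by
          have h : j + (n - (j + 1)) + 1 = n := by omega
          rw [← pow_add, ← pow_succ, h]
        show (Bq q n (j + 1) + q ^ (n - j) * Bq q n j) *
            (qp q q (j + 1) * qp q q (n + 1 - (j + 1))) = qp q q (n + 1)
        rw [hd2, qp_succ q q (n - (j+1)), qp_succ q q n, hq1, hq2]
        rw [hd1, qp_succ q q (n - (j+1))] at ih2
        rw [qp_succ q q j] at ih1 ⊢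
        linear_combination (1 - q * q ^ (n - (j+1))) * ih1 +
          q * q ^ (n - (j+1)) * (1 - q * q ^ j) * ih2

lemma Bq_div {q : ℝ} (h0 : 0 < q) (h1 : q < 1) {n k : ℕ} (hk : k ≤ n) :
    Bq q n k = qp q q n / (qp q q k * qp q q (n - k)) := by
  have h := Bq_mul q n k hk
  have h2 : qp q q k * qp q q (n - k) ≠ 0 :=
    (mul_pos (qp_pos h0 h1 k) (qp_pos h0 h1 (n - k))).ne'
  field_simp
  rw [eq_div_iff h2]; exact h

lemma SW_eq_sum {q : ℝ} (h0 : 0 < q) (h1 : q < 1) (x : ℝ) (n : ℕ) :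
    SW q x n = (∑ k ∈ Finset.range (n + 1), Bq q n k * (q ^ (k ^ 2) * (-x) ^ k)) /
      qp q q n := by
  unfold SW
  rw [Finset.sum_div]
  refine Finset.sum_congr rfl fun k hk => ?_
  have hk' : k ≤ n := by
    have := Finset.mem_range.mp hk; omega
  rw [Bq_div h0 h1 hk']
  have hck : qp q q k ≠ 0 := (qp_pos h0 h1 k).ne'
  have hcnk : qp q q (n - k) ≠ 0 := (qp_pos h0 h1 (n - k)).ne'
  have hcn : qp q q n ≠ 0 := (qp_pos h0 h1 n).ne'
  field_simp

noncomputable def Gs (p : ℝ) (n : ℕ) : ℝ :=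
  ∑ k ∈ Finset.range (n + 1), Bq (p ^ 2) n k * p ^ (2 * (k : ℤ) ^ 2 - 2 * n * k - k)

noncomputable def Fs (p : ℝ) (n : ℕ) : ℝ :=
  ∑ k ∈ Finset.range (n + 1), Bq (p ^ 2) n k * p ^ (2 * (k : ℤ) ^ 2 - 2 * n * k + k)

lemma ppow (p : ℝ) (hp : p ≠ 0) (a b : ℕ) (z w : ℤ) (h : w = 2 * a + z * b) :
    ((p ^ 2) ^ a) * (p ^ z) ^ b = p ^ w := by
  rw [← zpow_natCast (p ^ 2) a, ← zpow_natCast (p ^ z) b, ← zpow_natCast p 2,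
    ← zpow_mul, ← zpow_mul, ← zpow_add₀ hp]
  congr 1
  push_cast [h]
  ring

lemma SW2_eq {p : ℝ} (h0 : 0 < p) (h1 : p < 1) (n : ℕ) :
    SW (p ^ 2) (-((p ^ 2) ^ (-(n : ℤ)) / p)) n = Gs p n / qp (p ^ 2) (p ^ 2) n := by
  have hq0 : 0 < p ^ 2 := by positivity
  have hq1 : p ^ 2 < 1 := by nlinarith
  have hp : p ≠ 0 := h0.ne'
  rw [SW_eq_sum hq0 hq1, Gs]
  congr 1
  refine Finset.sum_congr rfl fun k hk => ?_
  congr 1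
  have hx : -(-((p ^ 2) ^ (-(n : ℤ)) / p)) = p ^ (-2 * (n : ℤ) - 1) := by
    rw [neg_neg, div_eq_mul_inv, ← zpow_natCast p 2, ← zpow_mul, ← zpow_sub_one₀ hp]
    congr 1
    push_cast
    ring
  rw [hx, ppow p hp (k ^ 2) k (-2 * (n : ℤ) - 1)
    (2 * (k : ℤ) ^ 2 - 2 * n * k - k) (by push_cast; ring)]

lemma SW1_eq {p : ℝ} (h0 : 0 < p) (h1 : p < 1) (n : ℕ) :
    SW (p ^ 2) (-(p * (p ^ 2) ^ (-(n : ℤ)))) n = Fs p n / qp (p ^ 2) (p ^ 2) n := by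
  have hq0 : 0 < p ^ 2 := by positivity
  have hq1 : p ^ 2 < 1 := by nlinarith
  have hp : p ≠ 0 := h0.ne'
  rw [SW_eq_sum hq0 hq1, Fs]
  congr 1
  refine Finset.sum_congr rfl fun k hk => ?_
  congr 1
  have hx : -(-(p * (p ^ 2) ^ (-(n : ℤ)))) = p ^ (-2 * (n : ℤ) + 1) := by
    rw [neg_neg, ← zpow_natCast p 2, ← zpow_mul, mul_comm, ← zpow_add_one₀ hp]
    congr 1
    push_cast
    ring
  rw [hx, ppow p hp (k ^ 2) k (-2 * (n : ℤ) + 1)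
    (2 * (k : ℤ) ^ 2 - 2 * n * k + k) (by push_cast; ring)]

lemma Bq_symm {q : ℝ} (h0 : 0 < q) (h1 : q < 1) {n k : ℕ} (hk : k ≤ n) :
    Bq q n (n - k) = Bq q n k := by
  rw [Bq_div h0 h1 (Nat.sub_le n k), Bq_div h0 h1 hk,
    show n - (n - k) = k from by omega, mul_comm]

lemma Fs_reflect {p : ℝ} (h0 : 0 < p) (h1 : p < 1) (n : ℕ) :
    Fs p n = p ^ n * Gs p n := by
  have hp : p ≠ 0 := h0.ne'
  have hq0 : 0 < p ^ 2 := by positivity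
  have hq1 : p ^ 2 < 1 := by nlinarith
  rw [Fs, Gs, Finset.mul_sum, ← Finset.sum_range_reflect]
  refine Finset.sum_congr rfl fun k hk => ?_
  have hk' : k ≤ n := by have := Finset.mem_range.mp hk; omega
  simp only [Nat.add_sub_cancel]
  rw [Bq_symm hq0 hq1 hk']
  have hE : (2 * ((n - k : ℕ) : ℤ) ^ 2 - 2 * (n : ℤ) * ((n - k : ℕ) : ℤ) +
      ((n - k : ℕ) : ℤ)) = (n : ℤ) + (2 * (k : ℤ) ^ 2 - 2 * (n : ℤ) * k - k) := by
    push_cast [Nat.cast_sub hk']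
    ring
  rw [hE, zpow_add₀ hp, zpow_natCast]
  ring

lemma pascal {p : ℝ} (hp : p ≠ 0) (n : ℕ) :
    Fs p (n + 1) = Gs p n + p * Fs p n := by
  have hterm : ∀ k ∈ Finset.range (n + 1),
      Bq (p ^ 2) (n + 1) (k + 1) *
        p ^ (2 * ((k + 1 : ℕ) : ℤ) ^ 2 - 2 * ((n + 1 : ℕ) : ℤ) * ((k + 1 : ℕ) : ℤ) +
          ((k + 1 : ℕ) : ℤ)) =
      Bq (p ^ 2) n (k + 1) *
        p ^ (2 * ((k + 1 : ℕ) : ℤ) ^ 2 - 2 * (n : ℤ) * ((k + 1 : ℕ) : ℤ) -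
          ((k + 1 : ℕ) : ℤ)) +
      p * (Bq (p ^ 2) n k * p ^ (2 * (k : ℤ) ^ 2 - 2 * (n : ℤ) * k + k)) := by
    intro k hk
    have hB : Bq (p ^ 2) (n + 1) (k + 1) =
        Bq (p ^ 2) n (k + 1) + (p ^ 2) ^ (n - k) * Bq (p ^ 2) n k := rfl
    rw [hB, add_mul]
    congr 1
    · congr 1
      push_cast
      ring_nf
    · have hk' : k ≤ n := by have := Finset.mem_range.mp hk; omega
      have hc : (p ^ 2) ^ (n - k) *
          p ^ (2 * ((k + 1 : ℕ) : ℤ) ^ 2 - 2 * ((n + 1 : ℕ) : ℤ) * ((k + 1 : ℕ) : ℤ) +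
            ((k + 1 : ℕ) : ℤ)) =
          p * p ^ (2 * (k : ℤ) ^ 2 - 2 * (n : ℤ) * k + k) := by
        rw [show p * p ^ (2 * (k : ℤ) ^ 2 - 2 * (n : ℤ) * k + k) =
            p ^ (1 + (2 * (k : ℤ) ^ 2 - 2 * (n : ℤ) * k + k)) from
          (zpow_one_add₀ hp _).symm]
        rw [← zpow_natCast (p ^ 2) (n - k), ← zpow_natCast p 2, ← zpow_mul,
          ← zpow_add₀ hp]
        congr 1
        push_cast [Nat.cast_sub hk']
        ring
      linear_combination Bq (p ^ 2) n k * hc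
  rw [Fs, Finset.sum_range_succ', Finset.sum_congr rfl hterm,
    Finset.sum_add_distrib, ← Finset.mul_sum]
  have h3 : (∑ k ∈ Finset.range (n + 1),
      Bq (p ^ 2) n (k + 1) *
        p ^ (2 * ((k + 1 : ℕ) : ℤ) ^ 2 - 2 * (n : ℤ) * ((k + 1 : ℕ) : ℤ) -
          ((k + 1 : ℕ) : ℤ))) +
      Bq (p ^ 2) (n + 1) 0 * p ^ (2 * ((0 : ℕ) : ℤ) ^ 2 - 2 * ((n + 1 : ℕ) : ℤ) * ((0 : ℕ) : ℤ) +
        ((0 : ℕ) : ℤ)) = Gs p n := by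
    have h0t : Bq (p ^ 2) (n + 1) 0 * p ^ (2 * ((0 : ℕ) : ℤ) ^ 2 -
        2 * ((n + 1 : ℕ) : ℤ) * ((0 : ℕ) : ℤ) + ((0 : ℕ) : ℤ)) =
        Bq (p ^ 2) n 0 * p ^ (2 * ((0 : ℕ) : ℤ) ^ 2 - 2 * (n : ℤ) * ((0 : ℕ) : ℤ) -
          ((0 : ℕ) : ℤ)) := by
      simp [Bq_zero]
    rw [h0t, ← Finset.sum_range_succ' (fun k =>
        Bq (p ^ 2) n k * p ^ (2 * (k : ℤ) ^ 2 - 2 * (n : ℤ) * k - k)) (n + 1),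
      Finset.sum_range_succ, Bq_of_lt (p ^ 2) (show n < n + 1 by omega)]
    rw [Gs]
    ring
  rw [add_right_comm, h3, Fs]

lemma Gs_closed {p : ℝ} (h0 : 0 < p) (h1 : p < 1) (n : ℕ) :
    Gs p n = (p ^ (n * (n + 1) / 2))⁻¹ * qp p (-p) n := by
  have hp : p ≠ 0 := h0.ne'
  induction n with
  | zero => simp [Gs, Bq_zero, qp_zero]
  | succ n ih =>
    have h1' := pascal hp n
    have h2 := Fs_reflect h0 h1 (n + 1)
    have h3 := Fs_reflect h0 h1 n
    have key : p ^ (n + 1) * Gs p (n + 1) = (1 + p ^ (n + 1)) * Gs p n := by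
      rw [← h2, h1', h3]
      ring
    have hNe : p ^ (n + 1) ≠ 0 := pow_ne_zero _ hp
    have hN : (n + 1) * (n + 1 + 1) / 2 = n * (n + 1) / 2 + (n + 1) := by
      have e1 : (n + 1) * (n + 1 + 1) = n * (n + 1) + 2 * (n + 1) := by ring
      omega
    rw [hN, qp_succ, pow_add]
    have hG : Gs p (n + 1) = (1 + p ^ (n + 1)) * Gs p n / p ^ (n + 1) := by
      field_simp at key ⊢
      linarith [key]
    rw [hG, ih]
    have hqpn : (p ^ (n * (n + 1) / 2)) ≠ 0 := pow_ne_zero _ hp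
    field_simp
    ring

lemma qp_split (p : ℝ) (n : ℕ) :
    qp (p ^ 2) (p ^ 2) n = qp p p n * qp p (-p) n := by
  rw [qp, qp, qp, ← Finset.prod_mul_distrib]
  refine Finset.prod_congr rfl fun k _ => ?_
  have h2 : (p ^ 2) ^ k = p ^ k * p ^ k := by
    rw [← pow_mul, two_mul, pow_add]
  rw [h2]
  ring

end SWaux

theorem SW_half_integer_values (q : ℝ) (hq0 : 0 < q) (hq1 : q < 1) (n : ℕ) :
    SW q (-(Real.sqrt q * q ^ (-(n : ℤ)))) n =
      ((Real.sqrt q) ^ (n * (n - 1) / 2))⁻¹ / qp (Real.sqrt q) (Real.sqrt q) n ∧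
    SW q (-(q ^ (-(n : ℤ)) / Real.sqrt q)) n =
      ((Real.sqrt q) ^ (n * (n + 1) / 2))⁻¹ / qp (Real.sqrt q) (Real.sqrt q) n := by
  open SWaux in
  have hp0 : 0 < Real.sqrt q := Real.sqrt_pos.mpr hq0
  have hsq : Real.sqrt q ^ 2 = q := Real.sq_sqrt hq0.le
  have hp1 : Real.sqrt q < 1 := by nlinarith
  set p := Real.sqrt q with hpdef
  have hq : q = p ^ 2 := hsq.symm
  have hp : p ≠ 0 := hp0.ne'
  have hpp : (0:ℝ) < qp p p n := qp_pos hp0 hp1 n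
  have hpn : (0:ℝ) < qp p (-p) n := qp_neg_pos hp0 n
  rw [hq]
  constructor
  · rw [SW1_eq hp0 hp1 n, Fs_reflect hp0 hp1 n, Gs_closed hp0 hp1 n, qp_split p n]
    have hA : n * (n + 1) / 2 = n * (n - 1) / 2 + n := by
      rcases n with _ | m
      · simp
      · have e1 : (m + 1) * (m + 1 + 1) = (m + 1) * m + 2 * (m + 1) := by ring
        have e2 : (m + 1) * (m + 1 - 1) = (m + 1) * m := by simp
        omega
    rw [hA, pow_add]
    field_simp
  · rw [SW2_eq hp0 hp1 n, Gs_closed hp0 hp1 n, qp_split p n]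
    field_simp
end
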